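/- Let F be a division ring, Λ = {α₁,…,αₙ} and Ω = {β₁,…,β_k} finite subsets of F with left and right minimal polynomials P_Λ (left) and P_Ω (right). A polynomial f ∈ F[z] satisfies f^ℓ(αᵢ)=0, f^r(βⱼ)=0, and (L_{αᵢ} f)^r(βⱼ)=0 for all i,j if and only if f ∈ P_Λ · F[z] · P_Ω, i.e., f = P_Λ · h · P_Ω for some h ∈ F[z]. -/

import Mathlib

open Polynomial MulOpposite

/-- Left evaluation of a polynomial `f = Σ zʲ fⱼ` at `a`: `f^ℓ(a) = Σ aʲ fⱼ`.
(Mathlib's `Polynomial.eval` is the right evaluation `Σ fⱼ aʲ`.) -/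
noncomputable def lEval {F : Type*} [DivisionRing F] (a : F) (f : F[X]) : F :=
  f.sum fun j c => a ^ j * c

/-- p is the left minimal polynomial of Δ: the monic generator of the right ideal
of polynomials left-vanishing on Δ. -/
def IsLeftMinPoly {F : Type*} [DivisionRing F] (Δ : Set F) (p : F[X]) : Prop :=
  p.Monic ∧ (∀ a ∈ Δ, lEval a p = 0) ∧
    ∀ f : F[X], (∀ a ∈ Δ, lEval a f = 0) → ∃ h : F[X], f = p * h

/-- p is the right minimal polynomial of Δ: the monic generator of the left ideal
of polynomials right-vanishing on Δ. -/
def IsRightMinPoly {F : Type*} [DivisionRing F] (Δ : Set F) (p : F[X]) : Prop :=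
  p.Monic ∧ (∀ a ∈ Δ, p.eval a = 0) ∧
    ∀ f : F[X], (∀ a ∈ Δ, f.eval a = 0) → ∃ h : F[X], f = h * p


namespace Stmt11Aux

/-- The canonical anti-isomorphism `R[X]ᵐᵒᵖ ≃+* Rᵐᵒᵖ[X]`. -/
noncomputable def polyOp (R : Type*) [Semiring R] : R[X]ᵐᵒᵖ ≃+* Rᵐᵒᵖ[X] :=
  ((RingEquiv.op (Polynomial.toFinsuppIso R)).trans AddMonoidAlgebra.opRingEquiv).trans
    ((AddMonoidAlgebra.mapDomainRingEquiv Rᵐᵒᵖ AddOpposite.opAddEquiv.symm).trans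
    (Polynomial.toFinsuppIso Rᵐᵒᵖ).symm)

variable {R : Type*} [Semiring R]

lemma polyOp_op_monomial (n : ℕ) (c : R) :
    polyOp R (op (monomial n c)) = monomial n (op c) := by
  simp [polyOp, toFinsupp_monomial, AddMonoidAlgebra.opRingEquiv_single,
    AddMonoidAlgebra.mapDomainRingEquiv_single]

lemma polyOp_op_C (c : R) : polyOp R (op (C c)) = C (op c) := by
  rw [← monomial_zero_left, polyOp_op_monomial, monomial_zero_left]

lemma polyOp_op_X : polyOp R (op (X : R[X])) = X := by
  rw [← monomial_one_one_eq_X, polyOp_op_monomial, op_one, monomial_one_one_eq_X]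

lemma coeff_polyOp (f : R[X]) (m : ℕ) : (polyOp R (op f)).coeff m = op (f.coeff m) := by
  induction f using Polynomial.induction_on' with
  | add p q hp hq => rw [op_add, map_add, coeff_add, hp, hq, coeff_add, op_add]
  | monomial n a => rw [polyOp_op_monomial, coeff_monomial, coeff_monomial, apply_ite op, op_zero]

lemma degree_polyOp (f : R[X]) : (polyOp R (op f)).degree = f.degree := by
  unfold degree
  congr 1
  ext m
  simp [mem_support_iff, coeff_polyOp]

lemma natDegree_polyOp (f : R[X]) : (polyOp R (op f)).natDegree = f.natDegree := by
  unfold natDegree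
  rw [degree_polyOp]

lemma monic_polyOp {f : R[X]} (hf : f.Monic) : (polyOp R (op f)).Monic := by
  unfold Monic leadingCoeff
  rw [natDegree_polyOp, coeff_polyOp, hf.coeff_natDegree, op_one]

/-- right-eval of a product with right factor vanishing. -/
lemma eval_mul_right_zero (p q : R[X]) (b : R) (h : q.eval b = 0) :
    (p * q).eval b = 0 := by
  induction p using Polynomial.induction_on' with
  | add u v hu hv => rw [add_mul, eval_add, hu, hv, add_zero]
  | monomial n c =>
    have e : (monomial n c : R[X]) * q = C c * (q * X ^ n) := by
      rw [← X_pow_mul, ← mul_assoc, C_mul_X_pow_eq_monomial]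
    rw [e, eval_C_mul, eval_mul_X_pow, h, zero_mul, mul_zero]

end Stmt11Aux

section LeftLemmas

open Stmt11Aux

variable {F : Type*} [DivisionRing F]

lemma lEval_add (a : F) (p q : F[X]) : lEval a (p + q) = lEval a p + lEval a q := by
  unfold lEval
  rw [Polynomial.sum_add_index] <;> intros <;> simp [mul_add]

lemma lEval_monomial (a : F) (n : ℕ) (c : F) : lEval a (monomial n c) = a ^ n * c := by
  unfold lEval
  rw [Polynomial.sum_monomial_index]
  simp

lemma lEval_C (a c : F) : lEval a (C c) = c := by
  rw [← monomial_zero_left, lEval_monomial, pow_zero, one_mul]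

lemma eval_polyOp (a : F) (f : F[X]) : (polyOp F (op f)).eval (op a) = op (lEval a f) := by
  induction f using Polynomial.induction_on' with
  | add p q hp hq => rw [op_add, map_add, eval_add, hp, hq, lEval_add, op_add]
  | monomial n c =>
    rw [polyOp_op_monomial, eval_monomial, lEval_monomial, ← op_pow, ← op_mul]

lemma lEval_polyOp (a : F) (f : F[X]) : lEval (op a) (polyOp F (op f)) = op (f.eval a) := by
  induction f using Polynomial.induction_on' with
  | add p q hp hq => rw [op_add, map_add, lEval_add, hp, hq, eval_add, op_add]
  | monomial n c =>
    rw [polyOp_op_monomial, eval_monomial, lEval_monomial, ← op_pow, ← op_mul]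

/-- left-eval of a product with left factor vanishing. -/
lemma lEval_mul_left_zero (a : F) (p q : F[X]) (h : lEval a p = 0) :
    lEval a (p * q) = 0 := by
  have h2 : (polyOp F (op p)).eval (op a) = 0 := by rw [eval_polyOp, h, op_zero]
  have h3 := eval_mul_right_zero (polyOp F (op q)) (polyOp F (op p)) (op a) h2
  rw [← map_mul, ← op_mul, eval_polyOp] at h3
  simpa using h3

lemma lEval_X_sub_C (a b : F) : lEval a (X - C b) = a - b := by
  have : op (lEval a (X - C b)) = op (a - b) := by
    rw [← eval_polyOp, op_sub, map_sub, polyOp_op_X, polyOp_op_C, eval_sub, eval_X, eval_C,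
      ← op_sub]
  exact op_injective this

/-- Left factor theorem: if `f^ℓ(a) = 0` then `f = (X - C a) * q`. -/
lemma exists_left_factor (a : F) (f : F[X]) (h : lEval a f = 0) :
    ∃ q, f = (X - C a) * q := by
  have hm : (X - C a).Monic := monic_X_sub_C a
  refine ⟨f /ₘ (X - C a), ?_⟩
  have hd := modByMonic_add_div f (X - C a)
  have hdeg : (f %ₘ (X - C a)).degree < 1 := by
    have := degree_modByMonic_lt f hm
    rwa [degree_X_sub_C] at this
  have hr : f %ₘ (X - C a) = C ((f %ₘ (X - C a)).coeff 0) :=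
    eq_C_of_degree_le_zero (Nat.WithBot.lt_one_iff_le_zero.mp hdeg)
  have h0 : lEval a f = (f %ₘ (X - C a)).coeff 0 := by
    conv_lhs => rw [← hd]
    rw [lEval_add, lEval_mul_left_zero a _ _ (by rw [lEval_X_sub_C, sub_self]), add_zero]
    conv_lhs => rw [hr]
    rw [lEval_C]
  rw [h] at h0
  conv_lhs => rw [← hd, hr, ← h0, map_zero, zero_add]

end LeftLemmas

section More
open Stmt11Aux
variable {F : Type*} [DivisionRing F]

/-- Right factor theorem. -/
lemma exists_right_factor (b : F) (f : F[X]) (h : f.eval b = 0) :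
    ∃ q, f = q * (X - C b) := by
  have h2 : lEval (op b) (polyOp F (op f)) = 0 := by rw [lEval_polyOp, h, op_zero]
  obtain ⟨q', hq'⟩ := exists_left_factor (op b) _ h2
  refine ⟨unop ((polyOp F).symm q'), ?_⟩
  have key : polyOp F (op (unop ((polyOp F).symm q') * (X - C b))) = polyOp F (op f) := by
    rw [op_mul, map_mul, op_sub, map_sub, polyOp_op_X, polyOp_op_C, op_unop,
      RingEquiv.apply_symm_apply, hq']
  exact (op_injective ((polyOp F).injective key)).symm

/-- Division with left quotient: `f = q * g + r`, `deg r < deg g`, for monic `g`. -/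
lemma exists_left_div (g : F[X]) (hg : g.Monic) (f : F[X]) :
    ∃ q r : F[X], f = q * g + r ∧ r.degree < g.degree := by
  set G := polyOp F (op g) with hGdef
  have hG : G.Monic := monic_polyOp hg
  set q' := polyOp F (op f) /ₘ G with hq'def
  set r' := polyOp F (op f) %ₘ G with hr'def
  have hd : r' + G * q' = polyOp F (op f) := modByMonic_add_div _ G
  refine ⟨unop ((polyOp F).symm q'), unop ((polyOp F).symm r'), ?_, ?_⟩
  · have key : polyOp F (op (unop ((polyOp F).symm q') * g + unop ((polyOp F).symm r')))
        = polyOp F (op f) := by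
      rw [op_add, map_add, op_mul, map_mul, op_unop, op_unop, RingEquiv.apply_symm_apply,
        RingEquiv.apply_symm_apply, ← hd, add_comm]
    exact (op_injective ((polyOp F).injective key)).symm
  · have e1 : polyOp F (op (unop ((polyOp F).symm r'))) = r' := by
      rw [op_unop, RingEquiv.apply_symm_apply]
    have hdeg := degree_modByMonic_lt (polyOp F (op f)) hG
    have e2 := degree_polyOp (unop ((polyOp F).symm r'))
    rw [e1] at e2
    calc (unop ((polyOp F).symm r')).degree
        = r'.degree := e2.symm
      _ < G.degree := hdeg
      _ = g.degree := degree_polyOp g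

/-- Every nonzero left ideal of `F[X]` has an element dividing (on the right) all members. -/
lemma exists_generator (I : Ideal F[X]) (x₀ : F[X]) (hx₀ : x₀ ∈ I) (hx₀0 : x₀ ≠ 0) :
    ∃ d ∈ I, d ≠ 0 ∧ ∀ x ∈ I, ∃ q, x = q * d := by
  classical
  have hS : ∃ m : ℕ, ∃ x, x ∈ I ∧ x ≠ 0 ∧ x.natDegree = m := ⟨x₀.natDegree, x₀, hx₀, hx₀0, rfl⟩
  obtain ⟨d₀, hd₀I, hd₀0, hdeg⟩ := Nat.find_spec hS
  have hmin : ∀ x ∈ I, x ≠ 0 → d₀.natDegree ≤ x.natDegree := by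
    intro x hxI hx0
    rw [hdeg]; exact Nat.find_min' hS ⟨x, hxI, hx0, rfl⟩
  set u := (d₀.leadingCoeff)⁻¹ with hudef
  have hu : u ≠ 0 := inv_ne_zero (leadingCoeff_ne_zero.mpr hd₀0)
  set d := C u * d₀ with hdDef
  have hdI : d ∈ I := by
    have := I.smul_mem (C u) hd₀I; rwa [smul_eq_mul] at this
  have hdd : d.degree = d₀.degree := by
    apply le_antisymm
    · calc d.degree ≤ (C u).degree + d₀.degree := degree_mul_le _ _
        _ = d₀.degree := by rw [degree_C hu, zero_add]
    · have e : d₀ = C u⁻¹ * d := by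
        rw [hdDef, ← mul_assoc, ← C_mul, inv_mul_cancel₀ hu, C_1, one_mul]
      calc d₀.degree = (C u⁻¹ * d).degree := by rw [← e]
        _ ≤ (C u⁻¹).degree + d.degree := degree_mul_le _ _
        _ ≤ 0 + d.degree := by gcongr; exact degree_C_le
        _ = d.degree := by rw [zero_add]
  have hd0 : d ≠ 0 := by
    intro h
    rw [h, degree_zero] at hdd
    exact hd₀0 (degree_eq_bot.mp hdd.symm)
  have hnd : d.natDegree = d₀.natDegree := by unfold natDegree; rw [hdd]
  have hdm : d.Monic := by
    unfold Monic leadingCoeff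
    rw [hnd, hdDef, coeff_C_mul, hudef]
    exact inv_mul_cancel₀ (leadingCoeff_ne_zero.mpr hd₀0)
  refine ⟨d, hdI, hd0, ?_⟩
  intro x hxI
  obtain ⟨q, r, hx, hr⟩ := exists_left_div d hdm x
  have hrI : r ∈ I := by
    have e : r = x - q * d := by rw [hx]; abel
    rw [e]
    refine I.sub_mem hxI ?_
    have := I.smul_mem q hdI; rwa [smul_eq_mul] at this
  by_cases hr0 : r = 0
  · exact ⟨q, by rw [hx, hr0, add_zero]⟩
  · exfalso
    have h1 := hmin r hrI hr0
    have h2 : r.natDegree < d.natDegree := natDegree_lt_natDegree hr0 hr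
    omega

end More

open Stmt11Aux in
/-- f satisfies f^ℓ(αᵢ)=0, f^r(βⱼ)=0, (L_{αᵢ}f)^r(βⱼ)=0 for all i,j
iff f ∈ P_Λ·F[z]·P_Ω. -/
theorem stmt11 {F : Type*} [DivisionRing F] (n k : ℕ)
    (α : Fin n → F) (β : Fin k → F)
    (hα : Function.Injective α) (hβ : Function.Injective β)
    (P Q : F[X]) (hP : IsLeftMinPoly (Set.range α) P)
    (hQ : IsRightMinPoly (Set.range β) Q) (f : F[X]) :
    ((∀ i, lEval (α i) f = 0) ∧ (∀ j, f.eval (β j) = 0) ∧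
      (∀ i j, ∀ q : F[X],
        f = C (lEval (α i) f) + (X - C (α i)) * q → q.eval (β j) = 0)) ↔
    (∃ h : F[X], f = P * h * Q) := by
  obtain ⟨hPm, hPv, hPmin⟩ := hP
  obtain ⟨hQm, hQv, hQmin⟩ := hQ
  -- left factors of P
  have hPi : ∀ i, ∃ Pi, P = (X - C (α i)) * Pi := fun i =>
    exists_left_factor (α i) P (hPv _ ⟨i, rfl⟩)
  choose Pi hPiEq using hPi
  constructor
  · rintro ⟨h1, h2, h3⟩
    -- f = P * g
    obtain ⟨g, hg⟩ := hPmin f (by rintro a ⟨i, rfl⟩; exact h1 i)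
    -- left quotients of f
    have hqi : ∀ i, ∃ qi, f = (X - C (α i)) * qi := fun i => exists_left_factor _ f (h1 i)
    choose qi hqiEq using hqi
    have hqiN : ∀ i j, (qi i).eval (β j) = 0 := fun i j =>
      h3 i j (qi i) (by rw [h1 i, map_zero, zero_add]; exact hqiEq i)
    have key : ∀ i, Pi i * g = qi i := by
      intro i
      refine mul_left_cancel₀ (X_sub_C_ne_zero (α i)) ?_
      rw [← mul_assoc, ← hPiEq i, ← hg, ← hqiEq i]
    -- the ideal
    set I : Ideal F[X] := Ideal.span (insert P (Set.range Pi)) with hIdef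
    have hPI : P ∈ I := Ideal.subset_span (Set.mem_insert _ _)
    have hPiI : ∀ i, Pi i ∈ I := fun i =>
      Ideal.subset_span (Set.mem_insert_of_mem _ ⟨i, rfl⟩)
    obtain ⟨d, hdI, hd0, hdiv⟩ := exists_generator I P hPI hPm.ne_zero
    obtain ⟨e, he⟩ := hdiv P hPI
    have heL : ∀ a ∈ Set.range α, lEval a e = 0 := by
      rintro a ⟨i, rfl⟩
      obtain ⟨s, hs⟩ := hdiv (Pi i) (hPiI i)
      have he2 : e = (X - C (α i)) * s := by
        refine mul_right_cancel₀ hd0 ?_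
        rw [← he, hPiEq i, hs, mul_assoc]
      rw [he2]
      exact lEval_mul_left_zero _ _ _ (by rw [lEval_X_sub_C, sub_self])
    obtain ⟨h₀, hh₀⟩ := hPmin e heL
    have hunit : h₀ * d = 1 := by
      refine mul_left_cancel₀ hPm.ne_zero ?_
      rw [← mul_assoc, ← hh₀, ← he, mul_one]
    have h1I : (1 : F[X]) ∈ I := by
      rw [← hunit]
      have := I.smul_mem h₀ hdI; rwa [smul_eq_mul] at this
    rw [hIdef, Ideal.span, Submodule.mem_span_insert] at h1I
    obtain ⟨u, z, hz, h1eq⟩ := h1I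
    rw [Submodule.mem_span_range_iff_exists_fun] at hz
    obtain ⟨c, hc⟩ := hz
    -- g right-vanishes on the β's
    have hgN : ∀ b ∈ Set.range β, g.eval b = 0 := by
      rintro b ⟨j, rfl⟩
      have hrep : g = u * f + ∑ i, c i * qi i := by
        calc g = 1 * g := (one_mul g).symm
          _ = (u • P + z) * g := by rw [← h1eq]
          _ = u * (P * g) + ∑ i, c i * (Pi i * g) := by
              rw [← hc, add_mul, smul_eq_mul, mul_assoc, Finset.sum_mul]
              congr 1
              refine Finset.sum_congr rfl fun i _ => ?_
              rw [smul_eq_mul, mul_assoc]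
          _ = u * f + ∑ i, c i * qi i := by
              rw [← hg]
              congr 1
              exact Finset.sum_congr rfl fun i _ => by rw [key i]
      rw [hrep, eval_add, eval_finset_sum]
      rw [eval_mul_right_zero u f _ (h2 j)]
      rw [Finset.sum_eq_zero fun i _ => eval_mul_right_zero _ _ _ (hqiN i j), add_zero]
    obtain ⟨h, hh⟩ := hQmin g hgN
    exact ⟨h, by rw [hg, hh, mul_assoc]⟩
  · rintro ⟨h, rfl⟩
    have hL : ∀ i, lEval (α i) (P * h * Q) = 0 := fun i => by
      rw [mul_assoc]
      exact lEval_mul_left_zero _ _ _ (hPv _ ⟨i, rfl⟩)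
    refine ⟨hL, fun j => eval_mul_right_zero _ _ _ (hQv _ ⟨j, rfl⟩), ?_⟩
    intro i j q hq
    rw [hL i, map_zero, zero_add] at hq
    have hq2 : q = Pi i * h * Q := by
      refine mul_left_cancel₀ (X_sub_C_ne_zero (α i)) ?_
      rw [← hq, hPiEq i, mul_assoc, mul_assoc, mul_assoc]
    rw [hq2]
    exact eval_mul_right_zero _ _ _ (hQv _ ⟨j, rfl⟩)
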